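/- Let C ⊆ ℕ^p be an integer cone, ⪯ an admissible total order on ℕ^p, and f ∈ C \ {0}. For C-semigroups S, T with Fb(S) = Fb(T) = f, write S ~ T if S ∩ B(f) = T ∩ B(f). Then: (i) for every C-semigroup S with Fb(S) = f, the set O(S) = S ∪ (C \ B(f)) is a B-semigroup with respect to f and S ~ O(S); (ii) if R₁ and R₂ are B-semigroups with respect to f and R₁ ≠ R₂, then R₁ ~ R₂ fails. Consequently, every ~-equivalence class of C-semigroups with Frobenius element f contains exactly one B-semigroup with respect to f. -/
import Mathlib


open Set BigOperators

/-- `C` is an integer cone: the intersection with `ℕ^p` of the set of nonnegative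
real linear combinations of a finite set `A ⊆ ℕ^p`. -/
def IsIntegerCone (p : ℕ) (C : Set (Fin p → ℕ)) : Prop :=
  ∃ A : Finset (Fin p → ℕ),
    C = {x : Fin p → ℕ | ∃ l : (Fin p → ℕ) → ℝ,
      (∀ a, 0 ≤ l a) ∧ ∀ i, (x i : ℝ) = ∑ a ∈ A, l a * (a i : ℝ)}

/-- An admissible total order on `ℕ^p`: total, compatible with addition,
with `0` minimum, and with finite down-sets. -/
structure AdmissibleOrder (p : ℕ) where
  le : (Fin p → ℕ) → (Fin p → ℕ) → Prop
  le_refl : ∀ x, le x x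
  le_antisymm : ∀ x y, le x y → le y x → x = y
  le_trans : ∀ x y z, le x y → le y z → le x z
  le_total : ∀ x y, le x y ∨ le y x
  add_right : ∀ x y z, le x y → le (x + z) (y + z)
  zero_le : ∀ x, le 0 x
  finite_le : ∀ f, {x : Fin p → ℕ | le x f}.Finite

/-- Strict version of an admissible order. -/
def AdmissibleOrder.lt {p : ℕ} (O : AdmissibleOrder p) (x y : Fin p → ℕ) : Prop :=
  O.le x y ∧ x ≠ y

/-- `S` is a `C`-semigroup: a submonoid of `ℕ^p` contained in `C` with finite complement in `C`. -/
def IsCSemigroup {p : ℕ} (C S : Set (Fin p → ℕ)) : Prop :=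
  S ⊆ C ∧ 0 ∈ S ∧ (∀ x ∈ S, ∀ y ∈ S, x + y ∈ S) ∧ (C \ S).Finite

/-- `f` is the Frobenius element of `S`: the `⪯`-maximum of `C \ S`. -/
def IsFrob {p : ℕ} (O : AdmissibleOrder p) (C S : Set (Fin p → ℕ)) (f : Fin p → ℕ) : Prop :=
  f ∈ C \ S ∧ ∀ x ∈ C \ S, O.le x f

/-- `B(f) = {x ∈ C : f - x ∈ C}`. -/
def BSet {p : ℕ} (C : Set (Fin p → ℕ)) (f : Fin p → ℕ) : Set (Fin p → ℕ) :=
  {x | x ∈ C ∧ ∃ y ∈ C, x + y = f}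

/-- `N(f) = #{x ∈ C \ {0} : x ⪯ f}`. -/
noncomputable def NNum {p : ℕ} (O : AdmissibleOrder p) (C : Set (Fin p → ℕ)) (f : Fin p → ℕ) : ℕ :=
  {x | x ∈ C ∧ x ≠ 0 ∧ O.le x f}.ncard

/-- The genus of `S`: the number of gaps `#(C \ S)`. -/
noncomputable def genusOf {p : ℕ} (C S : Set (Fin p → ℕ)) : ℕ := (C \ S).ncard

/-- The number of small elements `n(S) = #{s ∈ S : s ≺ Fb(S)}`; an element is smaller than
the Frobenius element iff it is strictly smaller than some gap. -/
noncomputable def smallCount {p : ℕ} (O : AdmissibleOrder p) (C S : Set (Fin p → ℕ)) : ℕ :=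
  {s | s ∈ S ∧ ∃ h ∈ C \ S, O.lt s h}.ncard

/-- The minimal generating set of `S`. -/
def msg {p : ℕ} (S : Set (Fin p → ℕ)) : Set (Fin p → ℕ) :=
  (S \ {0}) \ {x | ∃ a ∈ S \ {0}, ∃ b ∈ S \ {0}, a + b = x}

/-- `S` is a `B`-semigroup with respect to `f`. -/
def IsBSemigroup {p : ℕ} (O : AdmissibleOrder p) (C S : Set (Fin p → ℕ)) (f : Fin p → ℕ) : Prop :=
  IsCSemigroup C S ∧ IsFrob O C S f ∧ C \ BSet C f ⊆ S

/-- `a = α(S)`, the `⪯`-minimum of `(S \ {0}) ∩ B(f)`, with the convention `α(S) = f`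
when `S ∩ B(f) = {0}`. -/
def IsAlpha {p : ℕ} (O : AdmissibleOrder p) (C S : Set (Fin p → ℕ)) (f a : Fin p → ℕ) : Prop :=
  (a ∈ S ∧ a ≠ 0 ∧ a ∈ BSet C f ∧ ∀ x ∈ S, x ≠ 0 → x ∈ BSet C f → O.le a x)
  ∨ ((∀ x ∈ S ∩ BSet C f, x = 0) ∧ a = f)

/-- `x` is a special gap of `T`. -/
def SpecialGap {p : ℕ} (C T : Set (Fin p → ℕ)) (x : Fin p → ℕ) : Prop :=
  x ∈ C \ T ∧ x + x ∈ T ∧ ∀ t ∈ T, t ≠ 0 → x + t ∈ T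

/-- `l = λ(S)`, the `⪯`-largest gap of `S` lying outside `B(f)` (no convention case). -/
def IsLambdaGap {p : ℕ} (O : AdmissibleOrder p) (C S : Set (Fin p → ℕ)) (f l : Fin p → ℕ) : Prop :=
  l ∈ C \ S ∧ l ∉ BSet C f ∧ ∀ x ∈ C \ S, x ∉ BSet C f → O.le x l

/-- `l = λ(S)`, with the convention `λ(S) = 0` when `S` has no gap outside `B(f)`. -/
def IsLambda {p : ℕ} (O : AdmissibleOrder p) (C S : Set (Fin p → ℕ)) (f l : Fin p → ℕ) : Prop :=
  IsLambdaGap O C S f l ∨ ((∀ x ∈ C \ S, x ∈ BSet C f) ∧ l = 0)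

/-- `x ≤_C y` iff `y - x ∈ C`. -/
def leC {p : ℕ} (C : Set (Fin p → ℕ)) (x y : Fin p → ℕ) : Prop := ∃ d ∈ C, x + d = y

/-- The ordinary `C`-semigroup `S_c = {0} ∪ {x ∈ C : c ⪯ x}`. -/
def ordinarySemigroup {p : ℕ} (O : AdmissibleOrder p) (C : Set (Fin p → ℕ))
    (c : Fin p → ℕ) : Set (Fin p → ℕ) :=
  insert 0 {x | x ∈ C ∧ O.le c x}

/-- `S` is an arf semigroup in `C`. -/
def ArfSemigroup {p : ℕ} (C S : Set (Fin p → ℕ)) : Prop :=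
  ∀ x ∈ S, ∀ y ∈ S, ∀ z ∈ S, leC C z y → leC C y x →
    ∀ w : Fin p → ℕ, w + z = x + y → w ∈ S

/-- `S` is a saturated semigroup in `C`: whenever `s, s₁, …, s_r ∈ S` with `s_i ≤_C s`,
and `z : Fin r → ℤ` with `z₁s₁ + ⋯ + z_rs_r ∈ C` (as an element `t` of `ℕ^p`),
then `s + z₁s₁ + ⋯ + z_rs_r = s + t ∈ S`. -/
def SaturatedSemigroup {p : ℕ} (C S : Set (Fin p → ℕ)) : Prop :=
  ∀ (r : ℕ) (s : Fin p → ℕ) (si : Fin r → (Fin p → ℕ)) (z : Fin r → ℤ),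
    s ∈ S → (∀ i, si i ∈ S) → (∀ i, leC C (si i) s) →
    ∀ t ∈ C, (∀ j, (t j : ℤ) = ∑ i, z i * (si i j : ℤ)) → s + t ∈ S

/-- (i) O(S) = S ∪ (C \ B(f)) is a B-semigroup equivalent to S;
(ii) distinct B-semigroups are inequivalent; consequently every ~-class of C-semigroups
with Frobenius element f contains exactly one B-semigroup with respect to f. -/
theorem statement8 (p : ℕ) (hp : 0 < p) (C : Set (Fin p → ℕ)) (hC : IsIntegerCone p C)
    (O : AdmissibleOrder p) (f : Fin p → ℕ) (hfC : f ∈ C) (hf0 : f ≠ 0) :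
    (∀ S : Set (Fin p → ℕ), IsCSemigroup C S → IsFrob O C S f →
      IsBSemigroup O C (S ∪ (C \ BSet C f)) f ∧
        (S ∪ (C \ BSet C f)) ∩ BSet C f = S ∩ BSet C f) ∧
    (∀ R₁ R₂ : Set (Fin p → ℕ), IsBSemigroup O C R₁ f → IsBSemigroup O C R₂ f →
      R₁ ≠ R₂ → R₁ ∩ BSet C f ≠ R₂ ∩ BSet C f) ∧
    (∀ S : Set (Fin p → ℕ), IsCSemigroup C S → IsFrob O C S f →
      ∃! R : Set (Fin p → ℕ), IsBSemigroup O C R f ∧ R ∩ BSet C f = S ∩ BSet C f) := by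
  obtain ⟨A, hA⟩ := hC
  have h0C : (0 : Fin p → ℕ) ∈ C := by
    rw [hA]
    exact ⟨fun _ => 0, fun _ => le_refl 0, fun i => by simp⟩
  have haddC : ∀ x ∈ C, ∀ y ∈ C, x + y ∈ C := by
    intro x hx y hy
    rw [hA] at hx hy ⊢
    obtain ⟨l1, hl1, he1⟩ := hx
    obtain ⟨l2, hl2, he2⟩ := hy
    refine ⟨fun a => l1 a + l2 a, fun a => add_nonneg (hl1 a) (hl2 a), fun i => ?_⟩
    have : ((x + y) i : ℝ) = (x i : ℝ) + (y i : ℝ) := by push_cast; simp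
    rw [this, he1 i, he2 i, ← Finset.sum_add_distrib]
    exact Finset.sum_congr rfl fun a _ => by ring
  have hkey : ∀ x ∈ C, ∀ y, y ∈ C \ BSet C f → x + y ∈ C \ BSet C f := by
    rintro x hx y ⟨hyC, hyB⟩
    refine ⟨haddC _ hx _ hyC, ?_⟩
    rintro ⟨-, z, hz, hzf⟩
    exact hyB ⟨hyC, x + z, haddC _ hx _ hz, by rw [← hzf]; abel⟩
  have hfB : f ∈ BSet C f := ⟨hfC, 0, h0C, by simp⟩
  have part1 : ∀ S : Set (Fin p → ℕ), IsCSemigroup C S → IsFrob O C S f →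
      IsBSemigroup O C (S ∪ (C \ BSet C f)) f ∧
        (S ∪ (C \ BSet C f)) ∩ BSet C f = S ∩ BSet C f := by
    rintro S ⟨hSC, h0S, hSadd, hfin⟩ ⟨⟨hfC', hfS⟩, hmax⟩
    constructor
    · refine ⟨⟨?_, Or.inl h0S, ?_, ?_⟩, ⟨⟨hfC, ?_⟩, ?_⟩, fun x hx => Or.inr hx⟩
      · rintro x (hx | hx)
        · exact hSC hx
        · exact hx.1
      · rintro x (hx | hx) y (hy | hy)
        · exact Or.inl (hSadd _ hx _ hy)
        · exact Or.inr (hkey _ (hSC hx) _ hy)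
        · exact Or.inr (by rw [add_comm]; exact hkey _ (hSC hy) _ hx)
        · exact Or.inr (hkey _ hx.1 _ hy)
      · exact hfin.subset fun x hx => ⟨hx.1, fun h => hx.2 (Or.inl h)⟩
      · rintro (h | h)
        · exact hfS h
        · exact h.2 hfB
      · rintro x ⟨hxC, hxT⟩
        exact hmax x ⟨hxC, fun h => hxT (Or.inl h)⟩
    · ext x
      constructor
      · rintro ⟨(hx | hx), hxB⟩
        · exact ⟨hx, hxB⟩
        · exact absurd hxB hx.2
      · rintro ⟨hx, hxB⟩
        exact ⟨Or.inl hx, hxB⟩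
  have part2 : ∀ R₁ R₂ : Set (Fin p → ℕ), IsBSemigroup O C R₁ f → IsBSemigroup O C R₂ f →
      R₁ ≠ R₂ → R₁ ∩ BSet C f ≠ R₂ ∩ BSet C f := by
    rintro R₁ R₂ ⟨⟨h1C, -, -, -⟩, -, h1B⟩ ⟨⟨h2C, -, -, -⟩, -, h2B⟩ hne heq
    apply hne
    ext x
    constructor
    · intro hx
      by_cases hB : x ∈ BSet C f
      · have : x ∈ R₂ ∩ BSet C f := heq ▸ Set.mem_inter hx hB
        exact this.1
      · exact h2B ⟨h1C hx, hB⟩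
    · intro hx
      by_cases hB : x ∈ BSet C f
      · have : x ∈ R₁ ∩ BSet C f := heq.symm ▸ Set.mem_inter hx hB
        exact this.1
      · exact h1B ⟨h2C hx, hB⟩
  refine ⟨part1, part2, ?_⟩
  intro S hS hFS
  obtain ⟨hT, hTeq⟩ := part1 S hS hFS
  refine ⟨S ∪ (C \ BSet C f), ⟨hT, hTeq⟩, ?_⟩
  rintro R ⟨hR, hReq⟩
  by_contra h
  exact part2 R (S ∪ (C \ BSet C f)) hR hT h (hReq.trans hTeq.symm)
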